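/- Let $A_1, A_2, A_3$ be three points forming an isosceles triangle in $\mathbb{R}^2$ with $\|A_1 - A_2\| = \|A_1 - A_3\|$, and let weights be $w_1 = 1$, $w_2 = w_3 = w > 1/2$. If an interior point $O$ satisfies the balance condition $u(O,A_1) + w\, u(O,A_2) + w\, u(O,A_3) = 0$, then $O$ lies on the perpendicular bisector of the segment $A_2 A_3$ (equivalently $\|O - A_2\| = \|O - A_3\|$). -/

import Mathlib

open Real EuclideanGeometry

noncomputable def u (X Y : EuclideanSpace ℝ (Fin 2)) : EuclideanSpace ℝ (Fin 2) :=
  ‖Y - X‖⁻¹ • (Y - X)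

theorem fermat_point_on_perp_bisector
    (A₁ A₂ A₃ O : EuclideanSpace ℝ (Fin 2)) (w : ℝ) (hw : 1 / 2 < w)
    (hnc : ¬ Collinear ℝ ({A₁, A₂, A₃} : Set (EuclideanSpace ℝ (Fin 2))))
    (hiso : ‖A₁ - A₂‖ = ‖A₁ - A₃‖)
    (hO : O ∉ ({A₁, A₂, A₃} : Set (EuclideanSpace ℝ (Fin 2))))
    (hbal : u O A₁ + w • u O A₂ + w • u O A₃ = 0) :
    ‖O - A₂‖ = ‖O - A₃‖ := by
  simp only [Set.mem_insert_iff, Set.mem_singleton_iff, not_or] at hO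
  obtain ⟨h1, h2, h3⟩ := hO
  have ha0 : A₂ - O ≠ 0 := sub_ne_zero.mpr (Ne.symm h2)
  have hb0 : A₃ - O ≠ 0 := sub_ne_zero.mpr (Ne.symm h3)
  have hc0 : A₁ - O ≠ 0 := sub_ne_zero.mpr (Ne.symm h1)
  unfold u at hbal
  set a := A₂ - O with hadef
  set b := A₃ - O with hbdef
  set c := A₁ - O with hcdef
  have hra : (0:ℝ) < ‖a‖ := norm_pos_iff.mpr ha0
  have hrb : (0:ℝ) < ‖b‖ := norm_pos_iff.mpr hb0
  have hrc : (0:ℝ) < ‖c‖ := norm_pos_iff.mpr hc0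
  set ra := ‖a‖ with hradef
  set rb := ‖b‖ with hrbdef
  set rc := ‖c‖ with hrcdef
  set p := (inner ℝ a b : ℝ) with hpdef
  have hw0 : (0:ℝ) < w := by linarith
  have key : c = (-(w*rc/ra)) • a + (-(w*rc/rb)) • b := by
    have h2' := congrArg (fun x : EuclideanSpace ℝ (Fin 2) => rc • x) hbal
    simp only [smul_add, smul_smul, smul_zero] at h2'
    rw [mul_inv_cancel₀ hrc.ne', one_smul] at h2'
    linear_combination (norm := module) h2'

  set qa := (inner ℝ c a : ℝ) with hqadef
  set qb := (inner ℝ c b : ℝ) with hqbdef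
  have hpa : qa = -(w*rc/ra) * ra^2 + -(w*rc/rb) * p := by
    rw [hqadef, key, inner_add_left, real_inner_smul_left, real_inner_smul_left,
      real_inner_self_eq_norm_sq, real_inner_comm a b, ← hpdef, ← hradef]
  have hpb : qb = -(w*rc/ra) * p + -(w*rc/rb) * rb^2 := by
    rw [hqbdef, key, inner_add_left, real_inner_smul_left, real_inner_smul_left,
      real_inner_self_eq_norm_sq, ← hpdef, ← hrbdef]
  have hpc : rc^2 = (w*rc/ra)^2 * ra^2 + 2*(w*rc/ra)*(w*rc/rb)*p + (w*rc/rb)^2 * rb^2 := by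
    have h := real_inner_self_eq_norm_sq c
    conv_lhs at h => rw [key]
    simp only [inner_add_left, inner_add_right, real_inner_smul_left,
      real_inner_smul_right] at h
    rw [real_inner_self_eq_norm_sq, real_inner_self_eq_norm_sq, real_inner_comm a b,
      ← hpdef, ← hradef, ← hrbdef, ← hrcdef] at h
    rw [← h]; ring
  field_simp [hra.ne', hrb.ne'] at hpa hpb hpc
  -- from hpc: ra*rb = 2*w^2*(ra*rb + p)
  have h2 : ra * rb = 2*w^2*(ra*rb + p) := by
    have hrc2 : (0:ℝ) < rc^2 := by positivity
    have h3 : rc^2 * (ra*rb) = rc^2 * (2*w^2*(ra*rb+p)) := by linear_combination rc^2 * hpc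
    exact mul_left_cancel₀ hrc2.ne' h3
  have hkey1 : 0 < ra*rb + p := by
    nlinarith [mul_pos hra hrb, mul_pos hw0 hw0, sq_nonneg w]
  -- isosceles condition squared
  have hca : A₁ - A₂ = c - a := by rw [hadef, hcdef]; abel
  have hcb : A₁ - A₃ = c - b := by rw [hbdef, hcdef]; abel
  have hiso2 : rc^2 - 2*qa + ra^2 = rc^2 - 2*qb + rb^2 := by
    rw [hca, hcb] at hiso
    have h : ‖c - a‖^2 = ‖c - b‖^2 := by rw [hiso]
    simp only [norm_sub_sq_real, ← hradef, ← hrbdef, ← hrcdef, ← hqadef, ← hqbdef] at h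
    exact h
  have hfac : (ra - rb) * (2*w*rc*(ra*rb+p) + ra*rb*(ra+rb)) = 0 := by
    linear_combination ra*rb*hiso2 + 2*ra*hpa - 2*rb*hpb
  have hpos : 0 < 2*w*rc*(ra*rb+p) + ra*rb*(ra+rb) := by positivity
  have hab : ra = rb := by
    rcases mul_eq_zero.mp hfac with h | h
    · linarith
    · exact absurd h hpos.ne'
  calc ‖O - A₂‖ = ra := by rw [hradef, hadef, norm_sub_rev]
    _ = rb := hab
    _ = ‖O - A₃‖ := by rw [hrbdef, hbdef, norm_sub_rev]
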